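/- (Matsuo–Cherednik, symmetrization) Let n ≥ 2, κ ∈ ℂ, λ_1,…,λ_n ∈ ℂ, and let U ⊆ ℂ^n be an open set on which z_i ≠ z_j for all i ≠ j. Suppose holomorphic functions I_σ : U → ℂ, indexed by σ ∈ S_n, satisfy the KZ equations in components: ∂_i I_σ = κ Σ_{j ≠ i} I_{σ∘(i j)} / (z_i − z_j) + λ_{σ(i)} I_σ for all i = 1,…,n and all σ ∈ S_n, where (i j) is the transposition of i and j. Then φ = Σ_{σ ∈ S_n} I_σ satisfies the Calogero–Moser eigenvalue equation −Δφ + κ(κ−1) Σ_{i ≠ j} φ/(z_i − z_j)^2 = E φ on U, where Δ = ∂_1^2 + ⋯ + ∂_n^2 and E = −(λ_1^2 + ⋯ + λ_n^2). -/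

import Mathlib

open Finset

/-- Partial derivative `∂_i` of a function of `n` complex variables. -/
noncomputable def partialDeriv {n : ℕ} (i : Fin n) (f : (Fin n → ℂ) → ℂ) :
    (Fin n → ℂ) → ℂ :=
  fun z => fderiv ℂ f z (Pi.single i 1)

namespace MC
variable {n : ℕ}

/-! ### Analytic helper lemmas -/

lemma pd_sum {α : Type*} (s : Finset α) (f : α → (Fin n → ℂ) → ℂ) (i : Fin n)
    (z : Fin n → ℂ) (hf : ∀ a ∈ s, DifferentiableAt ℂ (f a) z) :
    partialDeriv i (fun w => ∑ a ∈ s, f a w) z = ∑ a ∈ s, partialDeriv i (f a) z := by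
  simp only [partialDeriv, fderiv_fun_sum hf, ContinuousLinearMap.sum_apply]

lemma pd_add (f g : (Fin n → ℂ) → ℂ) (i : Fin n) (z : Fin n → ℂ)
    (hf : DifferentiableAt ℂ f z) (hg : DifferentiableAt ℂ g z) :
    partialDeriv i (fun w => f w + g w) z = partialDeriv i f z + partialDeriv i g z := by
  simp only [partialDeriv, fderiv_fun_add hf hg, ContinuousLinearMap.add_apply]

lemma pd_const_mul (c : ℂ) (f : (Fin n → ℂ) → ℂ) (i : Fin n) (z : Fin n → ℂ)
    (hf : DifferentiableAt ℂ f z) :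
    partialDeriv i (fun w => c * f w) z = c * partialDeriv i f z := by
  simp only [partialDeriv, fderiv_const_mul hf, ContinuousLinearMap.smul_apply, smul_eq_mul]

noncomputable def projSub (i j : Fin n) : (Fin n → ℂ) →L[ℂ] ℂ :=
  ContinuousLinearMap.proj (R := ℂ) (φ := fun _ : Fin n => ℂ) i
    - ContinuousLinearMap.proj (R := ℂ) (φ := fun _ : Fin n => ℂ) j

lemma hasFDerivAt_coordSub (i j : Fin n) (z : Fin n → ℂ) :
    HasFDerivAt (fun w : Fin n → ℂ => w i - w j) (projSub i j) z := by
  have h := (projSub (n := n) i j).hasFDerivAt (x := z)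
  have he : ⇑(projSub (n := n) i j) = fun w : Fin n → ℂ => w i - w j := by
    ext w; simp [projSub]
  rwa [he] at h

lemma diff_coordSub (i j : Fin n) (z : Fin n → ℂ) :
    DifferentiableAt ℂ (fun w : Fin n → ℂ => w i - w j) z :=
  (hasFDerivAt_coordSub i j z).differentiableAt

lemma diff_div_coord (f : (Fin n → ℂ) → ℂ) (i j : Fin n) (z : Fin n → ℂ)
    (hf : DifferentiableAt ℂ f z) (hz : z i - z j ≠ 0) :
    DifferentiableAt ℂ (fun w => f w / (w i - w j)) z := by
  simp only [div_eq_mul_inv]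
  exact hf.mul ((differentiableAt_inv hz).comp z (diff_coordSub i j z))

lemma pd_div (f : (Fin n → ℂ) → ℂ) {i j : Fin n} (hij : j ≠ i) (z : Fin n → ℂ)
    (hf : DifferentiableAt ℂ f z) (hz : z i - z j ≠ 0) :
    partialDeriv i (fun w => f w / (w i - w j)) z
      = partialDeriv i f z / (z i - z j) - f z / (z i - z j) ^ 2 := by
  have hd := hasFDerivAt_coordSub i j z
  have hinv : HasFDerivAt (fun w : Fin n → ℂ => (w i - w j)⁻¹)
      ((ContinuousLinearMap.smulRight (1 : ℂ →L[ℂ] ℂ) (-((z i - z j) ^ 2)⁻¹)).comp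
        (projSub i j)) z :=
    (hasFDerivAt_inv hz).comp z hd
  have hmul := hf.hasFDerivAt.fun_mul hinv
  have h0 : partialDeriv i (fun w => f w / (w i - w j)) z
      = (fderiv ℂ (fun w => f w * (w i - w j)⁻¹) z) (Pi.single i 1) := by
    simp only [partialDeriv, div_eq_mul_inv]
  rw [h0, hmul.fderiv]
  have h1 : (Pi.single i (1:ℂ) : Fin n → ℂ) i = 1 := Pi.single_eq_same i 1
  have h2 : (Pi.single i (1:ℂ) : Fin n → ℂ) j = 0 := Pi.single_eq_of_ne hij 1
  simp only [ContinuousLinearMap.add_apply, ContinuousLinearMap.smul_apply,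
    ContinuousLinearMap.comp_apply, ContinuousLinearMap.sub_apply,
    ContinuousLinearMap.proj_apply, ContinuousLinearMap.smulRight_apply,
    ContinuousLinearMap.one_apply, projSub, h1, h2, smul_eq_mul, partialDeriv]
  field_simp
  ring

/-! ### Combinatorial helper lemmas -/

lemma sum_perm_mulRight (τ : Equiv.Perm (Fin n)) (g : Equiv.Perm (Fin n) → ℂ) :
    ∑ σ : Equiv.Perm (Fin n), g (σ * τ) = ∑ σ : Equiv.Perm (Fin n), g σ :=
  Equiv.sum_comp (Equiv.mulRight τ) g

lemma antisym_sum (g : Fin n → Fin n → ℂ) (hg : ∀ i j, i ≠ j → g i j = - g j i) :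
    ∑ i : Fin n, ∑ j ∈ univ.erase i, g i j = 0 := by
  have h1 : ∑ i : Fin n, ∑ j ∈ univ.erase i, g i j
      = ∑ j : Fin n, ∑ i ∈ univ.erase j, g i j := by
    apply Finset.sum_comm'
    intro x y
    simp only [mem_univ, true_and, and_true, Finset.mem_erase]
    exact ne_comm
  have h2 : ∑ j : Fin n, ∑ i ∈ univ.erase j, g i j
      = -∑ j : Fin n, ∑ i ∈ univ.erase j, g j i := by
    rw [← Finset.sum_neg_distrib]
    refine Finset.sum_congr rfl fun j _ => ?_
    rw [← Finset.sum_neg_distrib]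
    refine Finset.sum_congr rfl fun i hi => ?_
    exact hg i j (Finset.mem_erase.mp hi).1
  rw [h2] at h1
  linear_combination h1 / 2

lemma tsum_swap12 (F : Fin n → Fin n → Fin n → ℂ) :
    ∑ i : Fin n, ∑ j ∈ univ.erase i, ∑ k ∈ (univ.erase i).erase j, F i j k
      = ∑ i : Fin n, ∑ j ∈ univ.erase i, ∑ k ∈ (univ.erase i).erase j, F j i k := by
  rw [Finset.sum_comm' (s := (univ : Finset (Fin n))) (t := fun x => univ.erase x)
    (t' := univ) (s' := fun y => univ.erase y)
    (f := fun x y => ∑ k ∈ (univ.erase x).erase y, F x y k)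
    (by intro x y; simp only [mem_univ, true_and, and_true, Finset.mem_erase]
        exact ne_comm)]
  exact Finset.sum_congr rfl fun i _ => Finset.sum_congr rfl fun j _ => by
    rw [Finset.erase_right_comm]

lemma tsum_swap23 (F : Fin n → Fin n → Fin n → ℂ) :
    ∑ i : Fin n, ∑ j ∈ univ.erase i, ∑ k ∈ (univ.erase i).erase j, F i j k
      = ∑ i : Fin n, ∑ j ∈ univ.erase i, ∑ k ∈ (univ.erase i).erase j, F i k j := by
  refine Finset.sum_congr rfl fun i _ => ?_
  exact Finset.sum_comm' (s := univ.erase i) (t := fun j => (univ.erase i).erase j)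
    (t' := univ.erase i) (s' := fun k => (univ.erase i).erase k)
    (f := fun j k => F i j k)
    (by intro x y
        simp only [Finset.mem_erase, mem_univ, and_true]
        constructor
        · rintro ⟨h1, h2, h3⟩; exact ⟨⟨Ne.symm h2, h1⟩, h3⟩
        · rintro ⟨⟨h1, h2⟩, h3⟩; exact ⟨h2, Ne.symm h1, h3⟩)

lemma tsum_cyc (F : Fin n → Fin n → Fin n → ℂ) :
    ∑ i : Fin n, ∑ j ∈ univ.erase i, ∑ k ∈ (univ.erase i).erase j, F i j k
      = ∑ i : Fin n, ∑ j ∈ univ.erase i, ∑ k ∈ (univ.erase i).erase j, F j k i := by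
  rw [tsum_swap23 F]
  exact (tsum_swap12 (fun i j k => F j k i)).symm

lemma triple_zero (a : Fin n → ℂ) (ha : ∀ i j : Fin n, i ≠ j → a i ≠ a j) :
    ∑ i : Fin n, ∑ j ∈ univ.erase i, ∑ k ∈ (univ.erase i).erase j,
      1 / ((a i - a j) * (a i - a k)) = 0 := by
  set h : Fin n → Fin n → Fin n → ℂ :=
    fun i j k => 1 / ((a i - a j) * (a i - a k)) with hh
  have key : ∀ i j k : Fin n, j ≠ i → k ≠ i → k ≠ j →
      h i j k + h j k i + h k i j = 0 := by
    intro i j k hji hki hkj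
    have h1 : a i - a j ≠ 0 := sub_ne_zero.mpr (ha i j (Ne.symm hji))
    have h2 : a i - a k ≠ 0 := sub_ne_zero.mpr (ha i k (Ne.symm hki))
    have h3 : a j - a k ≠ 0 := sub_ne_zero.mpr (ha j k (Ne.symm hkj))
    have h4 : a j - a i ≠ 0 := sub_ne_zero.mpr (ha j i hji)
    have h5 : a k - a i ≠ 0 := sub_ne_zero.mpr (ha k i hki)
    have h6 : a k - a j ≠ 0 := sub_ne_zero.mpr (ha k j hkj)
    simp only [hh]
    field_simp
    ring
  have c1 := tsum_cyc h
  have c2 := tsum_cyc (fun i j k => h j k i)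
  have hsum : ∑ i : Fin n, ∑ j ∈ univ.erase i, ∑ k ∈ (univ.erase i).erase j,
      (h i j k + h j k i + h k i j) = 0 := by
    refine Finset.sum_eq_zero fun i _ => Finset.sum_eq_zero fun j hj =>
      Finset.sum_eq_zero fun k hk => ?_
    rw [Finset.mem_erase] at hj hk
    exact key i j k hj.1 (Finset.mem_erase.mp hk.2).1 hk.1
  have hexp : ∑ i : Fin n, ∑ j ∈ univ.erase i, ∑ k ∈ (univ.erase i).erase j,
      (h i j k + h j k i + h k i j)
      = (∑ i : Fin n, ∑ j ∈ univ.erase i, ∑ k ∈ (univ.erase i).erase j, h i j k)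
      + (∑ i : Fin n, ∑ j ∈ univ.erase i, ∑ k ∈ (univ.erase i).erase j, h j k i)
      + (∑ i : Fin n, ∑ j ∈ univ.erase i, ∑ k ∈ (univ.erase i).erase j, h k i j) := by
    simp only [Finset.sum_add_distrib]
  rw [hexp, ← c1, ← c2, ← c1] at hsum
  linear_combination hsum / 3

/-! ### The key algebraic identity -/

lemma key_algebra (κ : ℂ) (lam : Fin n → ℂ) (a : Fin n → ℂ)
    (f : Equiv.Perm (Fin n) → ℂ)
    (htriple : ∑ i : Fin n, ∑ j ∈ univ.erase i, ∑ k ∈ (univ.erase i).erase j,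
      1 / ((a i - a j) * (a i - a k)) = 0)
    (hanti : ∑ i : Fin n, ∑ j ∈ univ.erase i,
      ((∑ σ : Equiv.Perm (Fin n), lam (σ i) * f σ)
        + (∑ σ : Equiv.Perm (Fin n), lam (σ j) * f σ)) / (a i - a j) = 0) :
    ∑ i : Fin n,
      (κ * ∑ j ∈ univ.erase i,
          ((κ * ∑ k ∈ univ.erase i, (∑ σ : Equiv.Perm (Fin n), f σ) / (a i - a k)
              + ∑ σ : Equiv.Perm (Fin n), lam (σ i) * f σ) / (a i - a j)
            - (∑ σ : Equiv.Perm (Fin n), f σ) / (a i - a j) ^ 2)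
        + ∑ σ : Equiv.Perm (Fin n), lam (σ i) *
            (κ * ∑ j ∈ univ.erase i, f (σ * Equiv.swap i j) / (a i - a j)
              + lam (σ i) * f σ))
    = κ * (κ - 1) * ∑ i : Fin n, ∑ j ∈ univ.erase i,
        (∑ σ : Equiv.Perm (Fin n), f σ) / (a i - a j) ^ 2
      + (∑ i : Fin n, lam i ^ 2) * ∑ σ : Equiv.Perm (Fin n), f σ := by
  set A : ℂ := ∑ σ : Equiv.Perm (Fin n), f σ with hA
  have hswap : ∀ i j : Fin n,
      ∑ σ : Equiv.Perm (Fin n), lam (σ i) * f (σ * Equiv.swap i j)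
        = ∑ σ : Equiv.Perm (Fin n), lam (σ j) * f σ := by
    intro i j
    have h := sum_perm_mulRight (Equiv.swap i j) (fun σ => lam (σ j) * f σ)
    simpa [Equiv.Perm.mul_apply, Equiv.swap_apply_right] using h
  have hterm : ∀ i : Fin n,
      ∑ σ : Equiv.Perm (Fin n), lam (σ i) *
          (κ * ∑ j ∈ univ.erase i, f (σ * Equiv.swap i j) / (a i - a j)
            + lam (σ i) * f σ)
      = κ * ∑ j ∈ univ.erase i,
          (∑ σ : Equiv.Perm (Fin n), lam (σ j) * f σ) / (a i - a j)
        + ∑ σ : Equiv.Perm (Fin n), lam (σ i) ^ 2 * f σ := by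
    intro i
    have e1 : ∀ σ : Equiv.Perm (Fin n),
        lam (σ i) * (κ * ∑ j ∈ univ.erase i, f (σ * Equiv.swap i j) / (a i - a j)
            + lam (σ i) * f σ)
        = (∑ j ∈ univ.erase i, κ * (lam (σ i) * f (σ * Equiv.swap i j)) / (a i - a j))
          + lam (σ i) ^ 2 * f σ := by
      intro σ
      rw [mul_add, ← mul_assoc, Finset.mul_sum]
      congr 1
      · refine Finset.sum_congr rfl fun j _ => ?_
        generalize a i - a j = x
        ring
      · ring
    rw [Finset.sum_congr rfl fun σ _ => e1 σ, Finset.sum_add_distrib]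
    congr 1
    rw [Finset.sum_comm, Finset.mul_sum]
    refine Finset.sum_congr rfl fun j _ => ?_
    rw [← hswap i j, Finset.sum_div, Finset.mul_sum]
    refine Finset.sum_congr rfl fun σ _ => ?_
    generalize a i - a j = x
    ring
  have hsplit : ∀ i : Fin n, ∀ j ∈ univ.erase i,
      (κ * ∑ k ∈ univ.erase i, A / (a i - a k)
          + ∑ σ : Equiv.Perm (Fin n), lam (σ i) * f σ) / (a i - a j)
        - A / (a i - a j) ^ 2
      = (κ * A) * ∑ k ∈ (univ.erase i).erase j, 1 / ((a i - a j) * (a i - a k))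
        + (κ - 1) * (A / (a i - a j) ^ 2)
        + (∑ σ : Equiv.Perm (Fin n), lam (σ i) * f σ) / (a i - a j) := by
    intro i j hj
    have hsum : ∑ k ∈ univ.erase i, A / (a i - a k)
        = ∑ k ∈ (univ.erase i).erase j, A / (a i - a k) + A / (a i - a j) :=
      (Finset.sum_erase_add _ _ hj).symm
    rw [hsum, mul_add, add_div, add_div]
    have h1 : (κ * ∑ k ∈ (univ.erase i).erase j, A / (a i - a k)) / (a i - a j)
        = (κ * A) * ∑ k ∈ (univ.erase i).erase j, 1 / ((a i - a j) * (a i - a k)) := by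
      rw [Finset.mul_sum, Finset.sum_div, Finset.mul_sum]
      refine Finset.sum_congr rfl fun k _ => ?_
      generalize a i - a j = x
      generalize a i - a k = y
      ring
    rw [h1]
    generalize a i - a j = x
    ring
  have hI : ∀ i : Fin n,
      κ * ∑ j ∈ univ.erase i,
          ((κ * ∑ k ∈ univ.erase i, A / (a i - a k)
              + ∑ σ : Equiv.Perm (Fin n), lam (σ i) * f σ) / (a i - a j)
            - A / (a i - a j) ^ 2)
        + ∑ σ : Equiv.Perm (Fin n), lam (σ i) *
            (κ * ∑ j ∈ univ.erase i, f (σ * Equiv.swap i j) / (a i - a j)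
              + lam (σ i) * f σ)
      = κ * κ * A * (∑ j ∈ univ.erase i, ∑ k ∈ (univ.erase i).erase j,
            1 / ((a i - a j) * (a i - a k)))
        + κ * (κ - 1) * ∑ j ∈ univ.erase i, A / (a i - a j) ^ 2
        + κ * ∑ j ∈ univ.erase i,
            ((∑ σ : Equiv.Perm (Fin n), lam (σ i) * f σ)
              + (∑ σ : Equiv.Perm (Fin n), lam (σ j) * f σ)) / (a i - a j)
        + ∑ σ : Equiv.Perm (Fin n), lam (σ i) ^ 2 * f σ := by
    intro i
    rw [Finset.sum_congr rfl (hsplit i), hterm i]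
    simp only [Finset.sum_add_distrib, mul_add, add_div, ← Finset.mul_sum]
    ring
  rw [Finset.sum_congr rfl fun i _ => hI i]
  simp only [Finset.sum_add_distrib, ← Finset.mul_sum]
  rw [htriple, hanti]
  have hsq : ∑ i : Fin n, ∑ σ : Equiv.Perm (Fin n), lam (σ i) ^ 2 * f σ
      = (∑ i : Fin n, lam i ^ 2) * A := by
    rw [Finset.sum_comm]
    have h2 : ∀ σ : Equiv.Perm (Fin n), ∑ i : Fin n, lam (σ i) ^ 2 * f σ
        = (∑ i : Fin n, lam i ^ 2) * f σ := by
      intro σ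
      rw [← Finset.sum_mul]
      congr 1
      exact Equiv.sum_comp σ (fun p => lam p ^ 2)
    rw [Finset.sum_congr rfl fun σ _ => h2 σ, ← Finset.mul_sum]
  rw [hsq]
  ring

end MC

/-- **Matsuo–Cherednik correspondence, symmetrization.** If holomorphic functions
`I σ`, `σ ∈ S_n`, solve the KZ equations in components on an open set `U` where the
coordinates are pairwise distinct, then `φ = Σ_σ I σ` satisfies the Calogero–Moser
eigenvalue equation with coupling `κ(κ−1)` and eigenvalue `E = −(λ₁² + ⋯ + λ_n²)`. -/
theorem matsuo_cherednik_symmetrization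
    (n : ℕ) (hn : 2 ≤ n) (κ : ℂ) (lam : Fin n → ℂ)
    (U : Set (Fin n → ℂ)) (hU : IsOpen U)
    (hsep : ∀ z ∈ U, ∀ i j : Fin n, i ≠ j → z i ≠ z j)
    (I : Equiv.Perm (Fin n) → (Fin n → ℂ) → ℂ)
    (hhol : ∀ σ, DifferentiableOn ℂ (I σ) U)
    (hKZ : ∀ σ : Equiv.Perm (Fin n), ∀ i : Fin n, ∀ z ∈ U,
      partialDeriv i (I σ) z =
        κ * ∑ j ∈ univ.erase i, I (σ * Equiv.swap i j) z / (z i - z j) +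
          lam (σ i) * I σ z) :
    ∀ z ∈ U,
      -(∑ i : Fin n, partialDeriv i (partialDeriv i (fun w => ∑ σ : Equiv.Perm (Fin n), I σ w)) z) +
        κ * (κ - 1) * ∑ i : Fin n, ∑ j ∈ univ.erase i,
          (∑ σ : Equiv.Perm (Fin n), I σ z) / (z i - z j) ^ 2 =
      (-(∑ i : Fin n, lam i ^ 2)) * ∑ σ : Equiv.Perm (Fin n), I σ z := by
  intro z hz
  classical
  -- pointwise differentiability
  have hIat : ∀ (σ : Equiv.Perm (Fin n)) (w : Fin n → ℂ), w ∈ U → DifferentiableAt ℂ (I σ) w :=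
    fun σ w hw => (hhol σ).differentiableAt (hU.mem_nhds hw)
  have hφat : ∀ w ∈ U, DifferentiableAt ℂ (fun v => ∑ σ : Equiv.Perm (Fin n), I σ v) w :=
    fun w hw => DifferentiableAt.fun_sum fun σ _ => hIat σ w hw
  have hsep' : ∀ w ∈ U, ∀ i j : Fin n, j ≠ i → w i - w j ≠ 0 :=
    fun w hw i j hij => sub_ne_zero.mpr (hsep w hw i j (Ne.symm hij))
  -- Step A : first derivative of φ on U
  have hpd : ∀ i : Fin n, ∀ w ∈ U,
      partialDeriv i (fun v => ∑ σ : Equiv.Perm (Fin n), I σ v) w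
      = κ * ∑ j ∈ univ.erase i, (∑ σ : Equiv.Perm (Fin n), I σ w) / (w i - w j)
        + ∑ σ : Equiv.Perm (Fin n), lam (σ i) * I σ w := by
    intro i w hw
    have h0 : partialDeriv i (fun v => ∑ σ : Equiv.Perm (Fin n), I σ v) w
        = ∑ σ : Equiv.Perm (Fin n), partialDeriv i (I σ) w :=
      MC.pd_sum univ I i w (fun σ _ => hIat σ w hw)
    rw [h0, Finset.sum_congr rfl fun σ _ => hKZ σ i w hw, Finset.sum_add_distrib]
    congr 1
    rw [← Finset.mul_sum, Finset.sum_comm]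
    congr 1
    refine Finset.sum_congr rfl fun j _ => ?_
    rw [← Finset.sum_div]
    congr 1
    exact MC.sum_perm_mulRight (Equiv.swap i j) (fun σ => I σ w)
  -- Step B : second derivative of φ at z
  have hsecond : ∀ i : Fin n,
      partialDeriv i (partialDeriv i (fun w => ∑ σ : Equiv.Perm (Fin n), I σ w)) z
      = κ * ∑ j ∈ univ.erase i,
          ((κ * ∑ k ∈ univ.erase i, (∑ σ : Equiv.Perm (Fin n), I σ z) / (z i - z k)
              + ∑ σ : Equiv.Perm (Fin n), lam (σ i) * I σ z) / (z i - z j)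
            - (∑ σ : Equiv.Perm (Fin n), I σ z) / (z i - z j) ^ 2)
        + ∑ σ : Equiv.Perm (Fin n), lam (σ i) *
            (κ * ∑ j ∈ univ.erase i, I (σ * Equiv.swap i j) z / (z i - z j)
              + lam (σ i) * I σ z) := by
    intro i
    -- the function G i
    set F1 : (Fin n → ℂ) → ℂ :=
      fun w => ∑ j ∈ univ.erase i, (∑ σ : Equiv.Perm (Fin n), I σ w) / (w i - w j) with hF1
    set F2 : (Fin n → ℂ) → ℂ :=
      fun w => ∑ σ : Equiv.Perm (Fin n), lam (σ i) * I σ w with hF2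
    have hF1diff : ∀ w ∈ U, DifferentiableAt ℂ F1 w := by
      intro w hw
      exact DifferentiableAt.fun_sum fun j hj =>
        MC.diff_div_coord _ i j w (hφat w hw) (hsep' w hw i j (Finset.mem_erase.mp hj).1)
    have hF2diff : ∀ w ∈ U, DifferentiableAt ℂ F2 w :=
      fun w hw => DifferentiableAt.fun_sum fun σ _ => (hIat σ w hw).const_mul _
    have hev : partialDeriv i (fun w => ∑ σ : Equiv.Perm (Fin n), I σ w)
        =ᶠ[nhds z] fun w => κ * F1 w + F2 w :=
      Filter.eventuallyEq_of_mem (hU.mem_nhds hz) (fun w hw => hpd i w hw)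
    have h1 : partialDeriv i (partialDeriv i (fun w => ∑ σ : Equiv.Perm (Fin n), I σ w)) z
        = partialDeriv i (fun w => κ * F1 w + F2 w) z := by
      simp only [partialDeriv]
      rw [hev.fderiv_eq]
    rw [h1]
    have h2 : partialDeriv i (fun w => κ * F1 w + F2 w) z
        = partialDeriv i (fun w => κ * F1 w) z + partialDeriv i F2 z :=
      MC.pd_add (fun w => κ * F1 w) F2 i z ((hF1diff z hz).const_mul κ) (hF2diff z hz)
    have h3 : partialDeriv i (fun w => κ * F1 w) z = κ * partialDeriv i F1 z :=
      MC.pd_const_mul κ F1 i z (hF1diff z hz)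
    have h4 : partialDeriv i F1 z
        = ∑ j ∈ univ.erase i,
            partialDeriv i (fun w => (∑ σ : Equiv.Perm (Fin n), I σ w) / (w i - w j)) z :=
      MC.pd_sum (univ.erase i)
        (fun j w => (∑ σ : Equiv.Perm (Fin n), I σ w) / (w i - w j)) i z
        (fun j hj => MC.diff_div_coord _ i j z (hφat z hz)
          (hsep' z hz i j (Finset.mem_erase.mp hj).1))
    have h5 : partialDeriv i F2 z
        = ∑ σ : Equiv.Perm (Fin n), lam (σ i) * partialDeriv i (I σ) z := by
      rw [MC.pd_sum univ (fun σ w => lam (σ i) * I σ w) i z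
        (fun σ _ => (hIat σ z hz).const_mul _)]
      exact Finset.sum_congr rfl fun σ _ => MC.pd_const_mul _ (I σ) i z (hIat σ z hz)
    rw [h2, h3, h4, h5]
    congr 1
    · -- first part
      congr 1
      refine Finset.sum_congr rfl fun j hj => ?_
      have hji := (Finset.mem_erase.mp hj).1
      rw [MC.pd_div (fun w => ∑ σ : Equiv.Perm (Fin n), I σ w) hji z (hφat z hz)
        (hsep' z hz i j hji)]
      rw [hpd i z hz]
    · -- second part
      exact Finset.sum_congr rfl fun σ _ => by rw [hKZ σ i z hz]
  -- Step C : algebra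
  have htrip := MC.triple_zero z (hsep z hz)
  have hanti : ∑ i : Fin n, ∑ j ∈ univ.erase i,
      ((∑ σ : Equiv.Perm (Fin n), lam (σ i) * I σ z)
        + (∑ σ : Equiv.Perm (Fin n), lam (σ j) * I σ z)) / (z i - z j) = 0 := by
    refine MC.antisym_sum _ fun i j hij => ?_
    rw [← div_neg, neg_sub]
    ring_nf
  have halg := MC.key_algebra κ lam z (fun σ => I σ z) htrip hanti
  rw [Finset.sum_congr rfl fun i _ => hsecond i]
  linear_combination -halg
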